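/- (Theorem 2, transfer-matrix form.) Fix μ ∈ [0,1] and let O and O' be arbitrary complex 5×5 matrices, indexed by m, m' ∈ {2, 1, 0, −1, −2}. Define the complex 9×9 matrices D_O := Σ_{m,m'} O_{m,m'} · A⁽ᵐ⁾ ⊗ A⁽ᵐ'⁾ and similarly D_{O'}. Then: (i) Tr[T(μ)^L] > 0 for all sufficiently large L; (ii) the single-site limits a := lim_{L→∞} Tr[D_O · T(μ)^{L−1}]/Tr[T(μ)^L] and a' := lim_{L→∞} Tr[D_{O'} · T(μ)^{L−1}]/Tr[T(μ)^L] exist; (iii) for every integer r ≥ 1 the two-point limit G(r) := lim_{L→∞} Tr[D_O · T(μ)^{r−1} · D_{O'} · T(μ)^{L−r−1}]/Tr[T(μ)^L] exists; and (iv) there is a constant C ≥ 0, depending only on O, O', and μ, such that |G(r) − a·a'| ≤ C·(|λ₅(μ)|/λ₁(μ))^r for every r ≥ 1. (These trace ratios are the expectations of single-site observables in the S=2 asymmetric VBS state via its matrix product representation, so the statement asserts the exponential decay of all truncated two-point correlation functions with rate |λ₅/λ₁|.) -/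

import Mathlib

open Matrix Kronecker Filter

/-- The matrices `A⁽²⁾, A⁽¹⁾, A⁽⁰⁾, A⁽⁻¹⁾, A⁽⁻²⁾` (indexed by `0, 1, 2, 3, 4`) of the
S=2 asymmetric VBS state, regarded as complex matrices (`κ = √(μ(1+μ²))`). -/
noncomputable def A (μ : ℝ) : Fin 5 → Matrix (Fin 3) (Fin 3) ℂ :=
  ![!![0, 0, 0; 0, 0, 0; -(μ : ℂ), 0, 0],
    (1 / 2 : ℂ) • !![0, 0, 0;
      (Real.sqrt (μ * (1 + μ ^ 2)) : ℂ), 0, 0;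
      0, -(Real.sqrt (μ * (1 + μ ^ 2)) : ℂ), 0],
    (1 / (Real.sqrt 6 : ℂ)) • !![-(μ : ℂ), 0, 0; 0, 1 + (μ : ℂ) ^ 2, 0; 0, 0, -(μ : ℂ)],
    (1 / 2 : ℂ) • !![0, -(Real.sqrt (μ * (1 + μ ^ 2)) : ℂ), 0;
      0, 0, (Real.sqrt (μ * (1 + μ ^ 2)) : ℂ);
      0, 0, 0],
    !![0, 0, -(μ : ℂ); 0, 0, 0; 0, 0, 0]]

/-- The transfer matrix `T(μ)` of the S=2 asymmetric VBS state. -/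
noncomputable def T (μ : ℝ) : Matrix (Fin 3 × Fin 3) (Fin 3 × Fin 3) ℂ :=
  ∑ m : Fin 5, A μ m ⊗ₖ A μ m

/-- The transfer-matrix insertion `D_O` corresponding to a single-site operator `O`. -/
noncomputable def D (μ : ℝ) (O : Matrix (Fin 5) (Fin 5) ℂ) :
    Matrix (Fin 3 × Fin 3) (Fin 3 × Fin 3) ℂ :=
  ∑ m : Fin 5, ∑ m' : Fin 5, O m m' • (A μ m ⊗ₖ A μ m')

/-- The eigenvalue `λ₁(μ)`. -/
noncomputable def lam1 (μ : ℝ) : ℝ :=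
  (1 + 9 * μ ^ 2 + μ ^ 4 +
    Real.sqrt (1 + 8 * μ ^ 2 + 63 * μ ^ 4 + 8 * μ ^ 6 + μ ^ 8)) / 12

/-- The eigenvalue `λ₅(μ)`. -/
noncomputable def lam5 (μ : ℝ) : ℝ := -5 * μ * (1 + μ ^ 2) / 12

set_option linter.unusedSectionVars false
set_option linter.unreachableTactic false
set_option linter.unusedTactic false
set_option linter.unnecessarySeqFocus false

section helpers
variable {n : Type*} [Fintype n] [DecidableEq n]

lemma vmv_mul (a b : n → ℂ) (M : Matrix n n ℂ) :
    vecMulVec a b * M = vecMulVec a (Matrix.vecMul b M) := by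
  ext i j
  simp only [mul_apply, vecMulVec_apply, vecMul, dotProduct, Finset.mul_sum]
  exact Finset.sum_congr rfl fun r _ => by ring

lemma mul_vmv (a b : n → ℂ) (M : Matrix n n ℂ) :
    M * vecMulVec a b = vecMulVec (M *ᵥ a) b := by
  ext i j
  simp only [mul_apply, vecMulVec_apply, mulVec, dotProduct, Finset.sum_mul]
  exact Finset.sum_congr rfl fun r _ => by ring

lemma vmv_vmv (a b c d : n → ℂ) :
    vecMulVec a b * vecMulVec c d = (b ⬝ᵥ c) • vecMulVec a d := by
  ext i j
  simp only [mul_apply, vecMulVec_apply, Matrix.smul_apply, dotProduct, smul_eq_mul,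
    Finset.sum_mul]
  exact Finset.sum_congr rfl fun r _ => by ring

lemma trace_vmv (a b : n → ℂ) : (vecMulVec a b).trace = a ⬝ᵥ b := by
  simp [Matrix.trace, Matrix.diag, vecMulVec_apply, dotProduct]

lemma smul_vmv (c : ℂ) (a b : n → ℂ) : vecMulVec (c • a) b = c • vecMulVec a b := by
  ext i j; simp [vecMulVec_apply, mul_assoc]

lemma vmv_mid (a b c d : n → ℂ) (Y : Matrix n n ℂ) :
    vecMulVec a b * Y * vecMulVec c d = (b ⬝ᵥ Y *ᵥ c) • vecMulVec a d := by
  rw [vmv_mul, vmv_vmv, Matrix.dotProduct_mulVec]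

lemma herm_idem_trace_zero (W : Matrix n n ℂ)
    (h1 : Wᴴ = W) (h2 : W * W = W) (h3 : W.trace = 0) : W = 0 := by
  have h4 : (Wᴴ * W).trace = 0 := by rw [h1, h2, h3]
  have h5 : ∑ j, ∑ i, Complex.normSq (W i j) = 0 := by
    have := congrArg Complex.re h4
    rw [Matrix.trace] at this
    simpa [Matrix.diag, mul_apply, conjTranspose_apply, Complex.normSq_eq_norm_sq,
      ← Complex.normSq_eq_norm_sq, Complex.normSq, Complex.re_sum, mul_comm] using this
  ext i j
  have h6 : ∀ j' ∈ (Finset.univ : Finset n), (0:ℝ) ≤ ∑ i, Complex.normSq (W i j') :=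
    fun j' _ => Finset.sum_nonneg fun i _ => Complex.normSq_nonneg _
  have h7 := (Finset.sum_eq_zero_iff_of_nonneg h6).mp h5 j (Finset.mem_univ j)
  have h8 := (Finset.sum_eq_zero_iff_of_nonneg
    (fun i' _ => Complex.normSq_nonneg (W i' j))).mp h7 i (Finset.mem_univ i)
  simpa using Complex.normSq_eq_zero.mp h8

end helpers


namespace VBS

lemma lam1_quad (mu : ℝ) : lam1 mu ^ 2
    = (1 + 9 * mu ^ 2 + mu ^ 4) / 6 * lam1 mu - 5 * mu ^ 2 * (1 + mu ^ 2) ^ 2 / 72 := by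
  have h : Real.sqrt (1 + 8 * mu ^ 2 + 63 * mu ^ 4 + 8 * mu ^ 6 + mu ^ 8) ^ 2
      = 1 + 8 * mu ^ 2 + 63 * mu ^ 4 + 8 * mu ^ 6 + mu ^ 8 :=
    Real.sq_sqrt (by positivity)
  unfold lam1
  linear_combination (1 / 144) * h

lemma lam1c_quad (mu : ℝ) : ((lam1 mu : ℝ) : ℂ) ^ 2
    = ((1:ℂ) + 9 * (mu:ℂ) ^ 2 + (mu:ℂ) ^ 4) / 6 * ((lam1 mu : ℝ):ℂ)
      - 5 * (mu:ℂ) ^ 2 * (1 + (mu:ℂ) ^ 2) ^ 2 / 72 := by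
  have h := congrArg (fun r : ℝ => (r : ℂ)) (lam1_quad mu)
  push_cast at h
  linear_combination h

noncomputable def lam2 (mu : ℝ) : ℝ := (1 + 9 * mu ^ 2 + mu ^ 4) / 6 - lam1 mu
noncomputable def xx (mu : ℝ) : ℝ := mu * (1 + mu ^ 2) / 4
noncomputable def y1 (mu : ℝ) : ℝ := lam1 mu - 7 * mu ^ 2 / 6
noncomputable def y2 (mu : ℝ) : ℝ := lam2 mu - 7 * mu ^ 2 / 6

noncomputable def ev (mu : ℝ) : Fin 9 → ℝ
  | ⟨0,_⟩ => lam1 mu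
  | ⟨1,_⟩ => lam2 mu
  | ⟨2,_⟩ => -(5 * mu ^ 2 / 6)
  | ⟨3,_⟩ => lam5 mu
  | ⟨4,_⟩ => mu * (1 + mu ^ 2) / 12
  | ⟨5,_⟩ => lam5 mu
  | ⟨6,_⟩ => mu * (1 + mu ^ 2) / 12
  | ⟨7,_⟩ => mu ^ 2 / 6
  | ⟨8,_⟩ => mu ^ 2 / 6

noncomputable def U (mu : ℝ) : Fin 9 → Matrix (Fin 3) (Fin 3) ℝ
  | ⟨0,_⟩ => !![xx mu,0,0; 0,y1 mu,0; 0,0,xx mu]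
  | ⟨1,_⟩ => !![xx mu,0,0; 0,y2 mu,0; 0,0,xx mu]
  | ⟨2,_⟩ => !![1,0,0; 0,0,0; 0,0,-1]
  | ⟨3,_⟩ => !![0,1,0; 0,0,1; 0,0,0]
  | ⟨4,_⟩ => !![0,1,0; 0,0,-1; 0,0,0]
  | ⟨5,_⟩ => !![0,0,0; 1,0,0; 0,1,0]
  | ⟨6,_⟩ => !![0,0,0; 1,0,0; 0,-1,0]
  | ⟨7,_⟩ => !![0,0,1; 0,0,0; 0,0,0]
  | ⟨8,_⟩ => !![0,0,0; 0,0,0; 1,0,0]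

noncomputable def u (mu : ℝ) (k : Fin 9) : Fin 3 × Fin 3 → ℂ :=
  fun p => ((U mu k p.1 p.2 : ℝ) : ℂ)

noncomputable def nrm (mu : ℝ) : Fin 9 → ℝ
  | ⟨0,_⟩ => 2 * xx mu ^ 2 + y1 mu ^ 2
  | ⟨1,_⟩ => 2 * xx mu ^ 2 + y2 mu ^ 2
  | ⟨2,_⟩ => 2
  | ⟨3,_⟩ => 2
  | ⟨4,_⟩ => 2
  | ⟨5,_⟩ => 2
  | ⟨6,_⟩ => 2
  | ⟨7,_⟩ => 1
  | ⟨8,_⟩ => 1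

noncomputable def P (mu : ℝ) (k : Fin 9) : Matrix (Fin 3 × Fin 3) (Fin 3 × Fin 3) ℂ :=
  (((nrm mu k : ℝ) : ℂ))⁻¹ • vecMulVec (u mu k) (u mu k)



lemma T_eq (μ : ℝ) (hμ : 0 ≤ μ) : T μ =
    (!![(0:ℂ),0,0;0,0,0;-(μ:ℂ),0,0] ⊗ₖ !![(0:ℂ),0,0;0,0,0;-(μ:ℂ),0,0])
  + ((((μ:ℂ)*(1+(μ:ℂ)^2))/4) • (!![(0:ℂ),0,0;1,0,0;0,-1,0] ⊗ₖ !![(0:ℂ),0,0;1,0,0;0,-1,0]))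
  + (((1:ℂ)/6) • (!![-(μ:ℂ),0,0;0,1+(μ:ℂ)^2,0;0,0,-(μ:ℂ)] ⊗ₖ !![-(μ:ℂ),0,0;0,1+(μ:ℂ)^2,0;0,0,-(μ:ℂ)]))
  + ((((μ:ℂ)*(1+(μ:ℂ)^2))/4) • (!![(0:ℂ),-1,0;0,0,1;0,0,0] ⊗ₖ !![(0:ℂ),-1,0;0,0,1;0,0,0]))
  + (!![(0:ℂ),0,-(μ:ℂ);0,0,0;0,0,0] ⊗ₖ !![(0:ℂ),0,-(μ:ℂ);0,0,0;0,0,0]) := by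
  have hk : ((Real.sqrt (μ * (1 + μ ^ 2)) : ℝ) : ℂ) * ((Real.sqrt (μ * (1 + μ ^ 2)) : ℝ) : ℂ)
      = (μ:ℂ) * (1 + (μ:ℂ)^2) := by
    rw [← Complex.ofReal_mul, Real.mul_self_sqrt (by positivity)]
    push_cast; ring
  have h6 : ((Real.sqrt 6 : ℝ) : ℂ) * ((Real.sqrt 6 : ℝ) : ℂ) = 6 := by
    rw [← Complex.ofReal_mul, Real.mul_self_sqrt (by norm_num)]
    norm_num
  have hlit1 : !![0, 0, 0; ((Real.sqrt (μ * (1 + μ ^ 2)) : ℝ) : ℂ), 0, 0;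
      0, -((Real.sqrt (μ * (1 + μ ^ 2)) : ℝ) : ℂ), 0]
      = ((Real.sqrt (μ * (1 + μ ^ 2)) : ℝ) : ℂ) • !![(0:ℂ),0,0;1,0,0;0,-1,0] := by
    ext i j
    fin_cases i <;> fin_cases j <;> simp [Matrix.vecHead, Matrix.vecTail]
  have hlit3 : !![0, -((Real.sqrt (μ * (1 + μ ^ 2)) : ℝ) : ℂ), 0;
      0, 0, ((Real.sqrt (μ * (1 + μ ^ 2)) : ℝ) : ℂ); 0, 0, 0]
      = ((Real.sqrt (μ * (1 + μ ^ 2)) : ℝ) : ℂ) • !![(0:ℂ),-1,0;0,0,1;0,0,0] := by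
    ext i j
    fin_cases i <;> fin_cases j <;> simp [Matrix.vecHead, Matrix.vecTail]
  have e1 : A μ 1 = (((Real.sqrt (μ * (1 + μ ^ 2)) : ℝ) : ℂ)/2) • !![(0:ℂ),0,0;1,0,0;0,-1,0] := by
    show (1 / 2 : ℂ) • _ = _
    rw [hlit1, smul_smul]
    norm_num
    ring_nf
  have e3 : A μ 3 = (((Real.sqrt (μ * (1 + μ ^ 2)) : ℝ) : ℂ)/2) • !![(0:ℂ),-1,0;0,0,1;0,0,0] := by
    show (1 / 2 : ℂ) • _ = _
    rw [hlit3, smul_smul]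
    norm_num
    ring_nf
  have e2 : A μ 2 = ((1 / (Real.sqrt 6 : ℂ))) • !![-(μ:ℂ),0,0;0,1+(μ:ℂ)^2,0;0,0,-(μ:ℂ)] := rfl
  have e0 : A μ 0 = !![(0:ℂ),0,0;0,0,0;-(μ:ℂ),0,0] := rfl
  have e4 : A μ 4 = !![(0:ℂ),0,-(μ:ℂ);0,0,0;0,0,0] := rfl
  have c1 : (((Real.sqrt (μ * (1 + μ ^ 2)) : ℝ) : ℂ)/2) * (((Real.sqrt (μ * (1 + μ ^ 2)) : ℝ) : ℂ)/2)
      = ((μ:ℂ)*(1+(μ:ℂ)^2))/4 := by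
    rw [div_mul_div_comm, hk]; norm_num
  have c2 : (1 / ((Real.sqrt 6 : ℝ) : ℂ)) * (1 / ((Real.sqrt 6 : ℝ) : ℂ)) = (1:ℂ)/6 := by
    rw [div_mul_div_comm, h6]; norm_num
  rw [T, Fin.sum_univ_five, e0, e1, e2, e3, e4]
  rw [smul_kronecker, kronecker_smul, smul_smul, smul_kronecker, kronecker_smul, smul_smul,
    smul_kronecker, kronecker_smul, smul_smul]
  rw [c1, c2]


set_option maxHeartbeats 4000000 in
lemma heig (mu : ℝ) (hmu : 0 ≤ mu) (k : Fin 9) :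
    T mu *ᵥ u mu k = ((ev mu k : ℝ) : ℂ) • u mu k := by
  have hq := lam1c_quad mu
  rw [T_eq mu hmu]
  fin_cases k <;> funext p <;> fin_cases p <;>
    simp [mulVec, dotProduct, Fintype.sum_prod_type, Fin.sum_univ_three,
      kroneckerMap_apply, u, U, ev, xx, y1, y2, lam2, lam5, Matrix.vecHead, Matrix.vecTail] <;>
    push_cast <;> ring_nf <;>
    first
      | linear_combination hq
      | linear_combination (-1 : ℂ) * hq
      | linear_combination (2 : ℂ) * hq
      | linear_combination (-2 : ℂ) * hq
      | linear_combination (1/2 : ℂ) * hq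
      | linear_combination (-1/2 : ℂ) * hq

set_option maxHeartbeats 4000000 in
lemma hdot (mu : ℝ) (j k : Fin 9) :
    u mu j ⬝ᵥ u mu k = if j = k then ((nrm mu k : ℝ) : ℂ) else 0 := by
  have hq := lam1c_quad mu
  fin_cases j <;> fin_cases k <;>
    simp [dotProduct, Fintype.sum_prod_type, Fin.sum_univ_three, u, U, nrm,
      xx, y1, y2, lam2, lam5, Matrix.vecHead, Matrix.vecTail] <;>
    push_cast <;> ring_nf <;>
    first
      | linear_combination hq
      | linear_combination (-1 : ℂ) * hq
      | linear_combination (2 : ℂ) * hq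
      | linear_combination (-2 : ℂ) * hq


lemma sqrtD_ge_one (mu : ℝ) :
    1 ≤ Real.sqrt (1 + 8 * mu ^ 2 + 63 * mu ^ 4 + 8 * mu ^ 6 + mu ^ 8) := by
  have h := Real.sqrt_le_sqrt (show (1:ℝ) ≤ 1 + 8 * mu ^ 2 + 63 * mu ^ 4 + 8 * mu ^ 6 + mu ^ 8 by
    nlinarith [sq_nonneg mu, sq_nonneg (mu^2), sq_nonneg (mu^3), sq_nonneg (mu^4)])
  rwa [Real.sqrt_one] at h

lemma lam1_pos (mu : ℝ) : 0 < lam1 mu := by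
  have h := Real.sqrt_nonneg (1 + 8 * mu ^ 2 + 63 * mu ^ 4 + 8 * mu ^ 6 + mu ^ 8)
  unfold lam1
  nlinarith [sq_nonneg mu, sq_nonneg (mu^2)]

lemma rho_lt_lam1 (mu : ℝ) (h0 : 0 ≤ mu) (h1 : mu ≤ 1) : 5*mu*(1+mu^2)/12 < lam1 mu := by
  have h := sqrtD_ge_one mu
  unfold lam1
  nlinarith [sq_nonneg (2*mu - 5/4), sq_nonneg mu,
    mul_nonneg (mul_nonneg h0 h0) (sub_nonneg.mpr h1)]

lemma lam2_pos (mu : ℝ) (h0 : 0 < mu) : 0 < lam2 mu := by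
  have hlt : Real.sqrt (1 + 8 * mu ^ 2 + 63 * mu ^ 4 + 8 * mu ^ 6 + mu ^ 8)
      < 1 + 9 * mu ^ 2 + mu ^ 4 := by
    rw [Real.sqrt_lt' (by positivity)]
    nlinarith [pow_pos h0 2, pow_pos h0 4, sq_nonneg mu]
  unfold lam2 lam1
  linarith

lemma lam2_le_rho (mu : ℝ) (h0 : 0 < mu) (h1 : mu ≤ 1) : lam2 mu ≤ 5*mu*(1+mu^2)/12 := by
  have key : 1 + 9 * mu ^ 2 + mu ^ 4 - 5 * mu * (1 + mu ^ 2)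
      ≤ Real.sqrt (1 + 8 * mu ^ 2 + 63 * mu ^ 4 + 8 * mu ^ 6 + mu ^ 8) := by
    apply Real.le_sqrt_of_sq_le
    nlinarith [sq_nonneg (1 - mu), mul_pos h0 h0, sq_nonneg mu,
      mul_nonneg (mul_nonneg h0.le h0.le) h0.le, sq_nonneg (mu^2 - mu),
      mul_nonneg (mul_nonneg (mul_nonneg h0.le h0.le) h0.le) h0.le,
      sq_nonneg (1 - mu^2), sq_nonneg (mu - mu^2)]
  unfold lam2 lam1
  linarith

lemma abs_ev_le (mu : ℝ) (h0 : 0 < mu) (h1 : mu ≤ 1) (k : Fin 9) (hk : k ≠ 0) :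
    |ev mu k| ≤ 5*mu*(1+mu^2)/12 := by
  have h2 := lam2_pos mu h0
  have h3 := lam2_le_rho mu h0 h1
  fin_cases k
  · simp at hk
  · simpa [ev] using abs_le.mpr ⟨by linarith, h3⟩
  · rw [show ev mu ⟨2, by norm_num⟩ = -(5 * mu ^ 2 / 6) from rfl]
    rw [abs_le]
    constructor <;> nlinarith [sq_nonneg (1 - mu), sq_nonneg mu, h0.le]
  · rw [show ev mu ⟨3, by norm_num⟩ = lam5 mu from rfl]
    unfold lam5
    rw [abs_le]
    constructor <;> nlinarith [sq_nonneg mu, h0.le]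
  · rw [show ev mu ⟨4, by norm_num⟩ = mu * (1 + mu ^ 2) / 12 from rfl]
    rw [abs_le]
    constructor <;> nlinarith [sq_nonneg mu, h0.le, mul_pos h0 (by positivity : (0:ℝ) < 1 + mu^2)]
  · rw [show ev mu ⟨5, by norm_num⟩ = lam5 mu from rfl]
    unfold lam5
    rw [abs_le]
    constructor <;> nlinarith [sq_nonneg mu, h0.le]
  · rw [show ev mu ⟨6, by norm_num⟩ = mu * (1 + mu ^ 2) / 12 from rfl]
    rw [abs_le]
    constructor <;> nlinarith [sq_nonneg mu, h0.le, mul_pos h0 (by positivity : (0:ℝ) < 1 + mu^2)]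
  · rw [show ev mu ⟨7, by norm_num⟩ = mu ^ 2 / 6 from rfl]
    rw [abs_le]
    constructor <;> nlinarith [sq_nonneg (1 - mu), sq_nonneg mu, h0.le]
  · rw [show ev mu ⟨8, by norm_num⟩ = mu ^ 2 / 6 from rfl]
    rw [abs_le]
    constructor <;> nlinarith [sq_nonneg (1 - mu), sq_nonneg mu, h0.le]

lemma ev_ne (mu : ℝ) (h0 : 0 < mu) (k : Fin 9) : ev mu k ≠ 0 := by
  have h2 := lam2_pos mu h0
  have hl1 := lam1_pos mu
  have hsq : 0 < mu ^ 2 := pow_pos h0 2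
  have h5 : lam5 mu < 0 := by unfold lam5; nlinarith
  have h46 : 0 < mu * (1 + mu ^ 2) / 12 := by nlinarith
  have h78 : 0 < mu ^ 2 / 6 := by nlinarith
  have h22 : -(5 * mu ^ 2 / 6) < 0 := by nlinarith
  fin_cases k
  · exact hl1.ne'
  · exact h2.ne'
  · exact h22.ne
  · exact h5.ne
  · exact h46.ne'
  · exact h5.ne
  · exact h46.ne'
  · exact h78.ne'
  · exact h78.ne'

lemma nrm_pos (mu : ℝ) (h0 : 0 < mu) (k : Fin 9) : 0 < nrm mu k := by
  have hx : 0 < xx mu := by unfold xx; positivity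
  fin_cases k <;> simp [nrm] <;> positivity


lemma nrm_ne (mu : ℝ) (h0 : 0 < mu) (k : Fin 9) : ((nrm mu k : ℝ) : ℂ) ≠ 0 :=
  Complex.ofReal_ne_zero.mpr (nrm_pos mu h0 k).ne'

lemma u_conj (mu : ℝ) (k : Fin 9) (p : Fin 3 × Fin 3) :
    (starRingEnd ℂ) (u mu k p) = u mu k p := by
  simp [u]

lemma P_herm (mu : ℝ) (k : Fin 9) : (P mu k)ᴴ = P mu k := by
  ext i j
  simp only [P, conjTranspose_apply, Matrix.smul_apply, vecMulVec_apply, smul_eq_mul,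
    star_mul', star_inv₀, Complex.star_def, u, Complex.conj_ofReal]
  ring

lemma trace_P (mu : ℝ) (h0 : 0 < mu) (k : Fin 9) : (P mu k).trace = 1 := by
  rw [P, trace_smul, trace_vmv, hdot, if_pos rfl, smul_eq_mul,
    inv_mul_cancel₀ (nrm_ne mu h0 k)]

lemma PP (mu : ℝ) (h0 : 0 < mu) (j k : Fin 9) :
    P mu j * P mu k = if j = k then P mu k else 0 := by
  simp only [P, smul_mul_assoc, mul_smul_comm, vmv_vmv, hdot]
  rcases eq_or_ne j k with rfl | hjk
  · rw [if_pos rfl, if_pos rfl]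
    rw [smul_smul, smul_smul]
    congr 1
    field_simp
  · rw [if_neg hjk, if_neg hjk, zero_smul, smul_zero, smul_zero]

lemma TP (mu : ℝ) (h0 : 0 ≤ mu) (k : Fin 9) :
    T mu * P mu k = ((ev mu k : ℝ) : ℂ) • P mu k := by
  rw [P, mul_smul_comm, mul_vmv, heig mu h0 k, smul_vmv, smul_comm]

lemma complete (mu : ℝ) (h0 : 0 < mu) : ∑ k, P mu k = 1 := by
  set S := ∑ k, P mu k with hS
  have hS2 : S * S = S := by
    rw [hS, Finset.sum_mul_sum]
    calc ∑ j : Fin 9, ∑ k : Fin 9, P mu j * P mu k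
        = ∑ j : Fin 9, ∑ k : Fin 9, if j = k then P mu k else 0 := by
          refine Finset.sum_congr rfl fun j _ => Finset.sum_congr rfl fun k _ => PP mu h0 j k
      _ = ∑ j : Fin 9, P mu j := by
          refine Finset.sum_congr rfl fun j _ => ?_
          simp
  have hherm : (1 - S)ᴴ = 1 - S := by
    rw [conjTranspose_sub, conjTranspose_one, hS, conjTranspose_sum]
    simp_rw [P_herm]
  have hidem : (1 - S) * (1 - S) = 1 - S := by
    have expand : (1 - S) * (1 - S) = 1 - S - S + S * S := by noncomm_ring
    rw [expand, hS2]
    abel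
  have htrace : (1 - S).trace = 0 := by
    rw [trace_sub, trace_one, hS, trace_sum]
    simp_rw [trace_P mu h0]
    simp
  have := herm_idem_trace_zero _ hherm hidem htrace
  have h1 : (1 : Matrix (Fin 3 × Fin 3) (Fin 3 × Fin 3) ℂ) - S = 0 := this
  rw [sub_eq_zero] at h1
  exact h1.symm

lemma hpow (mu : ℝ) (h0 : 0 < mu) (n : ℕ) :
    T mu ^ n = ∑ k, (((ev mu k : ℝ) : ℂ)) ^ n • P mu k := by
  induction n with
  | zero => simp [complete mu h0]
  | succ n ih =>
      rw [pow_succ', ih, Finset.mul_sum]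
      refine Finset.sum_congr rfl fun k _ => ?_
      rw [mul_smul_comm, TP mu h0.le k, smul_smul, ← pow_succ]

lemma htrT (mu : ℝ) (h0 : 0 < mu) (n : ℕ) :
    (T mu ^ n).trace = ∑ k, (((ev mu k : ℝ) : ℂ)) ^ n := by
  rw [hpow mu h0 n, trace_sum]
  simp_rw [trace_smul, trace_P mu h0, smul_eq_mul, mul_one]

lemma htrM (mu : ℝ) (h0 : 0 < mu) (M : Matrix (Fin 3 × Fin 3) (Fin 3 × Fin 3) ℂ) (n : ℕ) :
    (M * T mu ^ n).trace = ∑ k, (((ev mu k : ℝ) : ℂ)) ^ n * (M * P mu k).trace := by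
  rw [hpow mu h0 n, Finset.mul_sum, trace_sum]
  simp_rw [mul_smul_comm, trace_smul, smul_eq_mul]

lemma hexp (mu : ℝ) (h0 : 0 < mu) (X Y : Matrix (Fin 3 × Fin 3) (Fin 3 × Fin 3) ℂ) (n : ℕ) :
    (X * T mu ^ n * Y * P mu 0).trace
      = ∑ k, (((ev mu k : ℝ) : ℂ)) ^ n * (X * P mu k * Y * P mu 0).trace := by
  rw [hpow mu h0 n, Finset.mul_sum, Finset.sum_mul, Finset.sum_mul, trace_sum]
  refine Finset.sum_congr rfl fun k _ => ?_
  rw [mul_smul_comm, smul_mul_assoc, smul_mul_assoc, trace_smul, smul_eq_mul]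

lemma rank1 (mu : ℝ) (h0 : 0 < mu) (X Y : Matrix (Fin 3 × Fin 3) (Fin 3 × Fin 3) ℂ) :
    (X * P mu 0 * Y * P mu 0).trace = (X * P mu 0).trace * (Y * P mu 0).trace := by
  have hPYP : P mu 0 * Y * P mu 0 = (Y * P mu 0).trace • P mu 0 := by
    have lhs : P mu 0 * Y * P mu 0
        = ((((nrm mu 0 :ℝ):ℂ))⁻¹ * (((nrm mu 0:ℝ):ℂ))⁻¹ * (u mu 0 ⬝ᵥ Y *ᵥ u mu 0))
            • vecMulVec (u mu 0) (u mu 0) := by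
      simp only [P]
      rw [smul_mul_assoc, smul_mul_assoc, mul_smul_comm, vmv_mid, smul_smul, smul_smul]
    have rhs : (Y * P mu 0).trace • P mu 0
        = ((((nrm mu 0:ℝ):ℂ))⁻¹ * (((nrm mu 0:ℝ):ℂ))⁻¹ * (u mu 0 ⬝ᵥ Y *ᵥ u mu 0))
            • vecMulVec (u mu 0) (u mu 0) := by
      simp only [P]
      rw [mul_smul_comm, trace_smul, mul_vmv, trace_vmv]
      simp only [smul_eq_mul, smul_smul]
      congr 1
      rw [dotProduct_comm ((Y *ᵥ u mu 0)) (u mu 0)]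
      ring
    rw [lhs, rhs]
  calc (X * P mu 0 * Y * P mu 0).trace
      = (X * (P mu 0 * Y * P mu 0)).trace := by rw [← mul_assoc, ← mul_assoc]
    _ = (Y * P mu 0).trace * (X * P mu 0).trace := by
        rw [hPYP, mul_smul_comm, trace_smul, smul_eq_mul]
    _ = (X * P mu 0).trace * (Y * P mu 0).trace := mul_comm _ _


lemma ev_zero (mu : ℝ) : ev mu 0 = lam1 mu := rfl

lemma lam1c_ne (mu : ℝ) : ((lam1 mu : ℝ) : ℂ) ≠ 0 :=
  Complex.ofReal_ne_zero.mpr (lam1_pos mu).ne'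

lemma evc_ne (mu : ℝ) (h0 : 0 < mu) (k : Fin 9) : ((ev mu k : ℝ) : ℂ) ≠ 0 :=
  Complex.ofReal_ne_zero.mpr (ev_ne mu h0 k)

lemma norm_q_lt_one (mu : ℝ) (h0 : 0 < mu) (h1 : mu ≤ 1) (k : Fin 9) (hk : k ≠ 0) :
    ‖((ev mu k : ℝ) : ℂ) / ((lam1 mu : ℝ) : ℂ)‖ < 1 := by
  rw [norm_div, Complex.norm_real, Complex.norm_real, Real.norm_eq_abs, Real.norm_eq_abs,
    abs_of_pos (lam1_pos mu), div_lt_one (lam1_pos mu)]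
  exact lt_of_le_of_lt (abs_ev_le mu h0 h1 k hk) (rho_lt_lam1 mu h0.le h1)

lemma keyLim (mu : ℝ) (h0 : 0 < mu) (h1 : mu ≤ 1)
    (M : Matrix (Fin 3 × Fin 3) (Fin 3 × Fin 3) ℂ) (j : ℕ) :
    Filter.Tendsto (fun L : ℕ => (M * T mu ^ (L - j)).trace / (T mu ^ L).trace)
      Filter.atTop (nhds ((M * P mu 0).trace / ((lam1 mu : ℝ) : ℂ) ^ j)) := by
  set q : Fin 9 → ℂ := fun k => ((ev mu k : ℝ) : ℂ) / ((lam1 mu : ℝ) : ℂ) with hq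
  set cc : Fin 9 → ℂ := fun k => (M * P mu k).trace / ((ev mu k : ℝ) : ℂ) ^ j with hcc
  have hq0 : q 0 = 1 := by
    rw [hq]
    simp only [ev_zero]
    exact div_self (lam1c_ne mu)
  have hnum : Filter.Tendsto (fun L : ℕ => ∑ k, q k ^ L * cc k) Filter.atTop (nhds (cc 0)) := by
    have h1' : Filter.Tendsto (fun L : ℕ => ∑ k, q k ^ L * cc k) Filter.atTop
        (nhds (∑ k : Fin 9, if k = 0 then cc k else 0)) := by
      refine tendsto_finset_sum _ fun k _ => ?_
      by_cases hk : k = 0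
      · subst hk
        rw [if_pos rfl]
        have hfun : (fun L : ℕ => q 0 ^ L * cc 0) = fun _ : ℕ => cc 0 := by
          funext L; rw [hq0, one_pow, one_mul]
        rw [hfun]
        exact tendsto_const_nhds
      · rw [if_neg hk]
        have := (tendsto_pow_atTop_nhds_zero_of_norm_lt_one
          (norm_q_lt_one mu h0 h1 k hk)).mul_const (cc k)
        simpa using this
    simpa using h1'
  have hden : Filter.Tendsto (fun L : ℕ => ∑ k, q k ^ L) Filter.atTop (nhds 1) := by
    have h1' : Filter.Tendsto (fun L : ℕ => ∑ k, q k ^ L) Filter.atTop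
        (nhds (∑ k : Fin 9, if k = 0 then (1:ℂ) else 0)) := by
      refine tendsto_finset_sum _ fun k _ => ?_
      by_cases hk : k = 0
      · subst hk
        rw [if_pos rfl]
        have hfun : (fun L : ℕ => q 0 ^ L) = fun _ : ℕ => (1:ℂ) := by
          funext L; rw [hq0, one_pow]
        show Filter.Tendsto (fun L : ℕ => q 0 ^ L) Filter.atTop (nhds 1)
        rw [hfun]
        exact tendsto_const_nhds
      · rw [if_neg hk]
        exact tendsto_pow_atTop_nhds_zero_of_norm_lt_one (norm_q_lt_one mu h0 h1 k hk)
    simpa using h1'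
  have hdiv := hnum.div hden one_ne_zero
  rw [div_one] at hdiv
  have hcongr : ∀ᶠ L in Filter.atTop,
      (fun L : ℕ => ∑ k, q k ^ L * cc k) L / (fun L : ℕ => ∑ k, q k ^ L) L
        = (M * T mu ^ (L - j)).trace / (T mu ^ L).trace := by
    rw [Filter.eventually_atTop]
    refine ⟨j, fun L hL => ?_⟩
    have e1 : ∀ k : Fin 9, q k ^ L * cc k
        = (((ev mu k : ℝ) : ℂ)) ^ (L - j) * (M * P mu k).trace / ((lam1 mu : ℝ) : ℂ) ^ L := by
      intro k
      rw [hq, hcc]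
      rw [div_pow, pow_sub₀ _ (evc_ne mu h0 k) hL]
      field_simp
    have e2 : ∀ k : Fin 9, q k ^ L = (((ev mu k : ℝ) : ℂ)) ^ L / ((lam1 mu : ℝ) : ℂ) ^ L := by
      intro k
      rw [hq, div_pow]
    show (∑ k, q k ^ L * cc k) / (∑ k, q k ^ L)
        = (M * T mu ^ (L - j)).trace / (T mu ^ L).trace
    have s1 : (∑ k, q k ^ L * cc k)
        = (∑ k, (((ev mu k : ℝ) : ℂ)) ^ (L - j) * (M * P mu k).trace)
            / ((lam1 mu : ℝ) : ℂ) ^ L := by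
      rw [Finset.sum_div]
      exact Finset.sum_congr rfl fun k _ => e1 k
    have s2 : (∑ k, q k ^ L)
        = (∑ k, (((ev mu k : ℝ) : ℂ)) ^ L) / ((lam1 mu : ℝ) : ℂ) ^ L := by
      rw [Finset.sum_div]
      exact Finset.sum_congr rfl fun k _ => e2 k
    rw [s1, s2, div_div_div_comm, div_self (pow_ne_zero L (lam1c_ne mu)), div_one,
      htrM mu h0 M (L - j), htrT mu h0 L]
  have hc0 : cc 0 = (M * P mu 0).trace / ((lam1 mu : ℝ) : ℂ) ^ j := by
    rw [hcc]; simp only [ev_zero]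
  rw [← hc0]
  exact Filter.Tendsto.congr' hcongr hdiv


lemma trace_real (mu : ℝ) (h0 : 0 < mu) (L : ℕ) :
    (T mu ^ L).trace = ((∑ k, ev mu k ^ L : ℝ) : ℂ) := by
  rw [htrT mu h0 L]
  push_cast
  rfl

lemma trace_pos_eventually (mu : ℝ) (h0 : 0 < mu) (h1 : mu ≤ 1) :
    ∃ L₀ : ℕ, ∀ L ≥ L₀, 0 < ((T mu ^ L).trace).re ∧ ((T mu ^ L).trace).im = 0 := by
  have hl1 := lam1_pos mu
  have hrho0 : (0:ℝ) ≤ 5*mu*(1+mu^2)/12 := by positivity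
  have hgap := rho_lt_lam1 mu h0.le h1
  have htend : Filter.Tendsto (fun L : ℕ => ((5*mu*(1+mu^2)/12) / lam1 mu) ^ L)
      Filter.atTop (nhds 0) :=
    tendsto_pow_atTop_nhds_zero_of_lt_one (by positivity) ((div_lt_one hl1).mpr hgap)
  have hev := htend.eventually_lt_const (show (0:ℝ) < 1/8 by norm_num)
  obtain ⟨L₀, hL₀⟩ := Filter.eventually_atTop.mp hev
  refine ⟨L₀, fun L hL => ?_⟩
  rw [trace_real mu h0 L]
  refine ⟨?_, by simp [← Complex.ofReal_pow]⟩
  simp only [Complex.ofReal_re]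
  have key : ∀ k ∈ Finset.univ.erase (0 : Fin 9),
      -((5*mu*(1+mu^2)/12)^L) ≤ ev mu k ^ L := by
    intro k hk
    have hkne : k ≠ 0 := Finset.ne_of_mem_erase hk
    have habs : |ev mu k ^ L| ≤ (5*mu*(1+mu^2)/12)^L := by
      rw [abs_pow]
      exact pow_le_pow_left₀ (abs_nonneg _) (abs_ev_le mu h0 h1 k hkne) L
    linarith [(abs_le.mp habs).1]
  have hsum : ∑ k, ev mu k ^ L
      = lam1 mu ^ L + ∑ k ∈ Finset.univ.erase 0, ev mu k ^ L := by
    rw [← Finset.add_sum_erase _ _ (Finset.mem_univ (0 : Fin 9))]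
    rfl
  have hlow : -(8 * (5*mu*(1+mu^2)/12)^L) ≤ ∑ k ∈ Finset.univ.erase (0:Fin 9), ev mu k ^ L := by
    have := Finset.sum_le_sum key
    have hcard : (Finset.univ.erase (0:Fin 9)).card = 8 := by decide
    rw [Finset.sum_const, hcard] at this
    simpa using this
  have h8 : 8 * (5*mu*(1+mu^2)/12)^L < lam1 mu ^ L := by
    have hq := hL₀ L hL
    rw [div_pow, div_lt_iff₀ (pow_pos hl1 L)] at hq
    nlinarith [pow_pos hl1 L]
  rw [hsum]
  linarith

end VBS


set_option maxHeartbeats 1000000 in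
open VBS in
/-- Theorem 2 in transfer-matrix form: for any single-site observables `O, O'` of the
S=2 asymmetric VBS state (`μ ∈ [0,1]`): (i) `Tr[T(μ)^L] > 0` for all large `L`;
(ii) the single-site expectations converge; (iii) the two-point expectations converge
for every `r ≥ 1`; (iv) the truncated two-point function decays exponentially with
rate `|λ₅/λ₁|`. -/
theorem truncated_correlation_decay_S2 (μ : ℝ) (hμ : μ ∈ Set.Icc (0 : ℝ) 1)
    (O O' : Matrix (Fin 5) (Fin 5) ℂ) :
    (∃ L₀ : ℕ, ∀ L ≥ L₀, 0 < ((T μ ^ L).trace).re ∧ ((T μ ^ L).trace).im = 0) ∧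
    ∃ a a' : ℂ,
      Tendsto (fun L : ℕ => (D μ O * T μ ^ (L - 1)).trace / (T μ ^ L).trace)
        atTop (nhds a) ∧
      Tendsto (fun L : ℕ => (D μ O' * T μ ^ (L - 1)).trace / (T μ ^ L).trace)
        atTop (nhds a') ∧
      ∃ G : ℕ → ℂ,
        (∀ r : ℕ, 1 ≤ r →
          Tendsto (fun L : ℕ =>
              (D μ O * T μ ^ (r - 1) * D μ O' * T μ ^ (L - r - 1)).trace / (T μ ^ L).trace)
            atTop (nhds (G r))) ∧
        ∃ C : ℝ, 0 ≤ C ∧ ∀ r : ℕ, 1 ≤ r →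
          ‖G r - a * a'‖ ≤ C * (|lam5 μ| / lam1 μ) ^ r := by
  obtain ⟨h0, h1⟩ := hμ
  rcases h0.eq_or_lt with hz | hpos
  · -- μ = 0
    subst hz
    have h6 : ((Real.sqrt 6 : ℝ) : ℂ) * ((Real.sqrt 6 : ℝ) : ℂ) = 6 := by
      rw [← Complex.ofReal_mul, Real.mul_self_sqrt (by norm_num)]
      norm_num
    have h6i : ((6:ℂ))⁻¹ ≠ 0 := by norm_num
    set e : Fin 3 × Fin 3 → ℂ := fun p => if p = ((1:Fin 3), (1:Fin 3)) then 1 else 0 with he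
    have hA2 : A 0 2 ⊗ₖ A 0 2 = (6:ℂ)⁻¹ • vecMulVec e e := by
      have h6ne : ((Real.sqrt 6 : ℝ) : ℂ) ≠ 0 := by
        intro h
        rw [h, mul_zero] at h6
        norm_num at h6
      ext p q
      fin_cases p <;> fin_cases q <;>
        simp [A, kroneckerMap_apply, vecMulVec_apply, he, Matrix.vecHead, Matrix.vecTail] <;>
        field_simp <;>
        first
          | linear_combination h6
          | linear_combination (-1:ℂ) * h6
          | linear_combination (2:ℂ) * h6
          | linear_combination (-2:ℂ) * h6
          | linear_combination (6:ℂ) * h6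
          | linear_combination (-6:ℂ) * h6
    have hA0 : A 0 0 = 0 := by
      ext i j
      fin_cases i <;> fin_cases j <;> norm_num [A, Matrix.vecHead, Matrix.vecTail]
    have hA1 : A 0 1 = 0 := by
      ext i j
      fin_cases i <;> fin_cases j <;> norm_num [A, Matrix.vecHead, Matrix.vecTail]
    have hA3 : A 0 3 = 0 := by
      ext i j
      fin_cases i <;> fin_cases j <;> norm_num [A, Matrix.vecHead, Matrix.vecTail, Matrix.cons_val_three, Matrix.cons_val_two, Matrix.cons_val_one]
    have hA4 : A 0 4 = 0 := by
      ext i j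
      fin_cases i <;> fin_cases j <;> norm_num [A, Matrix.vecHead, Matrix.vecTail, Matrix.cons_val_four, Matrix.cons_val_three, Matrix.cons_val_two, Matrix.cons_val_one]
    have hT0 : T 0 = (6:ℂ)⁻¹ • vecMulVec e e := by
      rw [T, Fin.sum_univ_five, hA0, hA1, hA3, hA4, hA2]
      simp only [Matrix.zero_kronecker, Matrix.kronecker_zero, add_zero, zero_add]
    have hD : ∀ X : Matrix (Fin 5) (Fin 5) ℂ, D 0 X = (X 2 2 * (6:ℂ)⁻¹) • vecMulVec e e := by
      intro X
      rw [D]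
      simp only [Fin.sum_univ_five, hA0, hA1, hA3, hA4, Matrix.zero_kronecker,
        Matrix.kronecker_zero, smul_zero, zero_add, add_zero, hA2, smul_smul]
    have hee : e ⬝ᵥ e = 1 := by
      simp [dotProduct, Fintype.sum_prod_type, Fin.sum_univ_three, he, Prod.ext_iff]
    have hvvidem : vecMulVec e e * vecMulVec e e = vecMulVec e e := by
      rw [vmv_vmv, hee, one_smul]
    have htrv : (vecMulVec e e).trace = 1 := by rw [trace_vmv, hee]
    have hlam50 : lam5 0 = 0 := by unfold lam5; norm_num
    have hTn : ∀ n : ℕ, 1 ≤ n → T 0 ^ n = ((6:ℂ)⁻¹)^n • vecMulVec e e := by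
      intro n hn
      induction n, hn using Nat.le_induction with
      | base => rw [pow_one, pow_one, hT0]
      | succ n hn ih =>
          rw [pow_succ, ih, hT0, smul_mul_assoc, mul_smul_comm, hvvidem, smul_smul, ← pow_succ]
    have htr0 : ∀ n : ℕ, 1 ≤ n → (T 0 ^ n).trace = ((6:ℂ)⁻¹)^n := by
      intro n hn
      rw [hTn n hn, trace_smul, htrv, smul_eq_mul, mul_one]
    have hDT : ∀ (X : Matrix (Fin 5) (Fin 5) ℂ) (n : ℕ),
        D 0 X * T 0 ^ n = (X 2 2 * (6:ℂ)⁻¹ * ((6:ℂ)⁻¹)^n) • vecMulVec e e := by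
      intro X n
      rcases Nat.eq_zero_or_pos n with rfl | hn
      · rw [pow_zero, mul_one, hD X, pow_zero, mul_one]
      · rw [hD X, hTn n hn, smul_mul_assoc, mul_smul_comm, hvvidem, smul_smul]
    refine ⟨⟨1, fun L hL => ?_⟩, O 2 2, O' 2 2, ?_, ?_,
      fun _ => O 2 2 * O' 2 2, ?_, 0, le_refl 0, ?_⟩
    · rw [htr0 L hL]
      have hc : ((6:ℂ)⁻¹)^L = ((((6:ℝ)⁻¹)^L : ℝ) : ℂ) := by push_cast; norm_num
      rw [hc]
      exact ⟨by simp only [Complex.ofReal_re]; positivity, Complex.ofReal_im _⟩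
    · apply Filter.Tendsto.congr' _ tendsto_const_nhds
      rw [Filter.EventuallyEq, Filter.eventually_atTop]
      refine ⟨1, fun L hL => ?_⟩
      obtain ⟨n, rfl⟩ := Nat.exists_eq_add_of_le hL
      rw [hDT O (1 + n - 1), trace_smul, htrv, smul_eq_mul, mul_one, htr0 (1+n) hL]
      rw [eq_div_iff (pow_ne_zero (1+n) h6i)]
      rw [show 1 + n - 1 = n from by omega]
      ring
    · apply Filter.Tendsto.congr' _ tendsto_const_nhds
      rw [Filter.EventuallyEq, Filter.eventually_atTop]
      refine ⟨1, fun L hL => ?_⟩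
      obtain ⟨n, rfl⟩ := Nat.exists_eq_add_of_le hL
      rw [hDT O' (1 + n - 1), trace_smul, htrv, smul_eq_mul, mul_one, htr0 (1+n) hL]
      rw [eq_div_iff (pow_ne_zero (1+n) h6i)]
      rw [show 1 + n - 1 = n from by omega]
      ring
    · intro r hr
      apply Filter.Tendsto.congr' _ tendsto_const_nhds
      rw [Filter.EventuallyEq, Filter.eventually_atTop]
      refine ⟨r + 2, fun L hL => ?_⟩
      obtain ⟨n, rfl⟩ := Nat.exists_eq_add_of_le hL
      obtain ⟨s, rfl⟩ := Nat.exists_eq_add_of_le hr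
      rw [mul_assoc (D 0 O * T 0 ^ (1 + s - 1)) (D 0 O') (T 0 ^ (1 + s + 2 + n - (1+s) - 1))]
      rw [hDT O' (1 + s + 2 + n - (1+s) - 1)]
      rw [mul_smul_comm, hDT O (1 + s - 1), smul_mul_assoc, hvvidem, smul_smul]
      rw [trace_smul, htrv, smul_eq_mul, mul_one, htr0 (1+s+2+n) (by omega)]
      rw [eq_div_iff (pow_ne_zero (1+s+2+n) h6i)]
      rw [show 1 + s - 1 = s from by omega, show 1 + s + 2 + n - (1+s) - 1 = n + 1 from by omega]
      ring
    · intro r hr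
      simp [hlam50]
  · -- 0 < μ
    have hl1 := lam1_pos μ
    have hlc1 := lam1c_ne μ
    have hrho : (0:ℝ) < 5*μ*(1+μ^2)/12 := by positivity
    set a : ℂ := (D μ O * VBS.P μ 0).trace / ((lam1 μ : ℝ) : ℂ) with ha
    set a' : ℂ := (D μ O' * VBS.P μ 0).trace / ((lam1 μ : ℝ) : ℂ) with ha'
    set G : ℕ → ℂ := fun r =>
      (D μ O * T μ ^ (r - 1) * D μ O' * VBS.P μ 0).trace / ((lam1 μ : ℝ) : ℂ) ^ (r + 1)
      with hGdef
    refine ⟨trace_pos_eventually μ hpos h1, a, a', ?_, ?_, G, ?_, ?_⟩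
    · have := keyLim μ hpos h1 (D μ O) 1
      rwa [pow_one] at this
    · have := keyLim μ hpos h1 (D μ O') 1
      rwa [pow_one] at this
    · intro r hr
      have := keyLim μ hpos h1 (D μ O * T μ ^ (r-1) * D μ O') (r + 1)
      simpa only [Nat.sub_sub] using this
    · refine ⟨(∑ k ∈ Finset.univ.erase (0:Fin 9),
          ‖(D μ O * VBS.P μ k * D μ O' * VBS.P μ 0).trace‖) / ((5*μ*(1+μ^2)/12) * lam1 μ),
        by positivity, ?_⟩
      intro r hr
      obtain ⟨m, rfl⟩ := Nat.exists_eq_succ_of_ne_zero (Nat.one_le_iff_ne_zero.mp hr)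
      have habs5 : |lam5 μ| = 5*μ*(1+μ^2)/12 := by
        unfold lam5
        rw [abs_of_nonpos (by nlinarith [sq_nonneg μ])]
        ring
      have hnum : (D μ O * T μ ^ m * D μ O' * VBS.P μ 0).trace
          = ((lam1 μ : ℝ) : ℂ)^m
              * ((D μ O * VBS.P μ 0).trace * (D μ O' * VBS.P μ 0).trace)
            + ∑ k ∈ Finset.univ.erase (0:Fin 9),
                ((ev μ k : ℝ) : ℂ)^m * (D μ O * VBS.P μ k * D μ O' * VBS.P μ 0).trace := by
        rw [hexp μ hpos (D μ O) (D μ O') m,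
          ← Finset.add_sum_erase _ _ (Finset.mem_univ (0 : Fin 9))]
        congr 1
        rw [rank1 μ hpos (D μ O) (D μ O'), ev_zero]
      have hdiff : G (m+1) - a * a'
          = (∑ k ∈ Finset.univ.erase (0:Fin 9),
              ((ev μ k : ℝ) : ℂ)^m * (D μ O * VBS.P μ k * D μ O' * VBS.P μ 0).trace)
            / ((lam1 μ : ℝ) : ℂ) ^ (m + 2) := by
        rw [hGdef]
        simp only [Nat.add_sub_cancel]
        rw [hnum, add_div, ha, ha']
        have hcancel : ((lam1 μ : ℝ) : ℂ)^m
            * ((D μ O * VBS.P μ 0).trace * (D μ O' * VBS.P μ 0).trace)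
            / ((lam1 μ : ℝ) : ℂ) ^ (m + 2)
            = (D μ O * VBS.P μ 0).trace / ((lam1 μ : ℝ) : ℂ)
              * ((D μ O' * VBS.P μ 0).trace / ((lam1 μ : ℝ) : ℂ)) := by
          rw [pow_add]
          field_simp
        rw [show m + 1 + 1 = m + 2 from rfl, hcancel]
        ring
      rw [hdiff]
      rw [norm_div, norm_pow, Complex.norm_real, Real.norm_eq_abs, abs_of_pos hl1]
      have hsumb : ‖∑ k ∈ Finset.univ.erase (0:Fin 9),
          ((ev μ k : ℝ) : ℂ)^m * (D μ O * VBS.P μ k * D μ O' * VBS.P μ 0).trace‖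
          ≤ (5*μ*(1+μ^2)/12)^m * ∑ k ∈ Finset.univ.erase (0:Fin 9),
              ‖(D μ O * VBS.P μ k * D μ O' * VBS.P μ 0).trace‖ := by
        refine le_trans (norm_sum_le _ _) ?_
        rw [Finset.mul_sum]
        refine Finset.sum_le_sum fun k hk => ?_
        rw [norm_mul, norm_pow, Complex.norm_real, Real.norm_eq_abs]
        exact mul_le_mul_of_nonneg_right
          (pow_le_pow_left₀ (abs_nonneg _) (abs_ev_le μ hpos h1 k (Finset.ne_of_mem_erase hk)) m)
          (norm_nonneg _)
      have hfinal : (5*μ*(1+μ^2)/12)^m * (∑ k ∈ Finset.univ.erase (0:Fin 9),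
              ‖(D μ O * VBS.P μ k * D μ O' * VBS.P μ 0).trace‖) / lam1 μ ^ (m+2)
          = (∑ k ∈ Finset.univ.erase (0:Fin 9),
              ‖(D μ O * VBS.P μ k * D μ O' * VBS.P μ 0).trace‖) / ((5*μ*(1+μ^2)/12) * lam1 μ)
            * (|lam5 μ| / lam1 μ)^(m+1) := by
        rw [habs5]
        generalize (5*μ*(1+μ^2)/12) = ρ at hrho ⊢
        rw [div_pow]
        field_simp
        ring
      calc ‖∑ k ∈ Finset.univ.erase (0:Fin 9),
              ((ev μ k : ℝ) : ℂ)^m * (D μ O * VBS.P μ k * D μ O' * VBS.P μ 0).trace‖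
            / lam1 μ ^ (m+2)
          ≤ (5*μ*(1+μ^2)/12)^m * (∑ k ∈ Finset.univ.erase (0:Fin 9),
              ‖(D μ O * VBS.P μ k * D μ O' * VBS.P μ 0).trace‖) / lam1 μ ^ (m+2) :=
            (div_le_div_iff_of_pos_right (pow_pos hl1 (m+2))).mpr hsumb
        _ = _ := hfinal
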